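/- Let H = (V, E) be a hypergraph and let C ≥ 1 be a real constant such that for every natural number x ≥ 1 there exists a coloring of V with x colors under which every hyperedge with at least C·x vertices contains vertices of all x colors. Then for all natural numbers t ≥ 1 and k ≥ 1 with t·k^{1/t} ≥ 1, there exists a coloring of the t-element subsets of V with k colors under which every hyperedge e ∈ E with |e| ≥ C·⌈t·k^{1/t}⌉ contains, for each of the k colors, a t-element subset of e with that color. -/

import Mathlib

lemma pow_le_choose_of_mul_le (t : ℕ) :
    ∀ (x : ℕ) (r : ℝ), 1 ≤ r → (t : ℝ) * r ≤ x → r ^ t ≤ (x.choose t : ℝ) := by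
  induction t with
  | zero => intro x r _ _; simp
  | succ t ih =>
    intro x r hr hx
    have hx1 : 1 ≤ x := by
      have h1 : (1 : ℝ) ≤ (x : ℝ) := by
        have : (1 : ℝ) ≤ ((t : ℝ) + 1) * r := by nlinarith [Nat.cast_nonneg (α := ℝ) t]
        push_cast at hx; linarith
      exact_mod_cast h1
    obtain ⟨y, rfl⟩ : ∃ y, x = y + 1 := ⟨x - 1, by omega⟩
    have h1 : (t : ℝ) * r ≤ y := by push_cast at hx ⊢; nlinarith
    have h2 := ih y r hr h1
    have hid : ((y + 1 : ℕ) : ℝ) * (Nat.choose y t : ℝ)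
        = ((y + 1).choose (t + 1) : ℝ) * ((t + 1 : ℕ) : ℝ) := by
      exact_mod_cast congrArg (Nat.cast (R := ℝ)) (Nat.add_one_mul_choose_eq y t)
    have hr0 : (0 : ℝ) < r := lt_of_lt_of_le one_pos hr
    have hch0 : (0 : ℝ) ≤ (Nat.choose y t : ℝ) := Nat.cast_nonneg _
    have hrt : r ^ (t + 1) = r * r ^ t := by ring
    have step1 : r ^ (t + 1) ≤ r * (Nat.choose y t : ℝ) := by
      rw [hrt]; exact mul_le_mul_of_nonneg_left h2 hr0.le
    have step2 : r * (Nat.choose y t : ℝ) ≤ ((y + 1).choose (t + 1) : ℝ) := by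
      have ht1 : (0 : ℝ) < ((t : ℝ) + 1) := by positivity
      rw [← mul_le_mul_iff_of_pos_right ht1]
      push_cast at hid hx ⊢
      nlinarith
    exact le_trans step1 step2

/-- If for every `x ≥ 1` the vertices of `H` can be `x`-colored
so that every hyperedge with at least `C·x` vertices is polychromatic, then for
all `t, k ≥ 1` with `t·k^(1/t) ≥ 1` the `t`-element subsets can be `k`-colored
so that every hyperedge with at least `C·⌈t·k^(1/t)⌉` vertices contains a
`t`-element subset of each color. -/
theorem tuple_coloring_of_linear_vertex_coloring
    {α : Type*} (E : Set (Finset α)) (C : ℝ) (hC : 1 ≤ C)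
    (h : ∀ x : ℕ, 1 ≤ x → ∃ φ : α → Fin x,
      ∀ e ∈ E, C * (x : ℝ) ≤ (e.card : ℝ) → ∀ c : Fin x, ∃ v ∈ e, φ v = c) :
    ∀ t k : ℕ, 1 ≤ t → 1 ≤ k →
      (1 : ℝ) ≤ (t : ℝ) * (k : ℝ) ^ ((1 : ℝ) / t) →
      ∃ χ : Finset α → Fin k,
        ∀ e ∈ E,
          C * (⌈(t : ℝ) * (k : ℝ) ^ ((1 : ℝ) / t)⌉₊ : ℝ) ≤ (e.card : ℝ) →
          ∀ c : Fin k, ∃ T ⊆ e, T.card = t ∧ χ T = c := by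
  classical
  intro t k ht hk hge
  set r : ℝ := (k : ℝ) ^ ((1 : ℝ) / t) with hr_def
  set x : ℕ := ⌈(t : ℝ) * r⌉₊ with hx_def
  have htR : (0 : ℝ) < t := by exact_mod_cast ht
  have hkR : (1 : ℝ) ≤ k := by exact_mod_cast hk
  have hr1 : 1 ≤ r := Real.one_le_rpow hkR (by positivity)
  have hrt : r ^ t = (k : ℝ) := by
    rw [hr_def, ← Real.rpow_natCast ((k : ℝ) ^ ((1:ℝ)/t)) t,
      ← Real.rpow_mul (by positivity), one_div, inv_mul_cancel₀ (ne_of_gt htR),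
      Real.rpow_one]
  have hx1 : 1 ≤ x := by
    rw [hx_def]
    exact Nat.one_le_ceil_iff.mpr (lt_of_lt_of_le one_pos hge)
  have hk_choose : k ≤ x.choose t := by
    have := pow_le_choose_of_mul_le t x r hr1 (Nat.le_ceil _)
    rw [hrt] at this
    exact_mod_cast this
  have hcard : Fintype.card (Fin k) ≤ Fintype.card {S : Finset (Fin x) // S.card = t} := by
    rw [Fintype.card_fin, Fintype.card_finset_len, Fintype.card_fin]
    exact hk_choose
  obtain ⟨g⟩ := Function.Embedding.nonempty_of_card_le hcard
  obtain ⟨φ, hφ⟩ := h x hx1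
  set χ : Finset α → Fin k := fun T =>
    if hT : ∃ c : Fin k, T.image φ = (g c : Finset (Fin x)) then hT.choose
    else ⟨0, hk⟩ with hχ_def
  refine ⟨χ, ?_⟩
  intro e he hecard c
  have hpoly := hφ e he hecard
  choose v hv1 hv2 using hpoly
  set S : Finset (Fin x) := (g c : Finset (Fin x)) with hS_def
  set T : Finset α := S.image v with hT_def
  have hinj : Set.InjOn v S := by
    intro a _ b _ hab
    rw [← hv2 a, ← hv2 b, hab]
  have hTsub : T ⊆ e := by
    intro y hy
    obtain ⟨s, _, rfl⟩ := Finset.mem_image.mp hy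
    exact hv1 s
  have hTcard : T.card = t := by
    rw [hT_def, Finset.card_image_of_injOn hinj, hS_def, (g c).2]
  have himg : T.image φ = S := by
    rw [hT_def, Finset.image_image]
    have : (φ ∘ v) = id := funext hv2
    rw [this, Finset.image_id]
  refine ⟨T, hTsub, hTcard, ?_⟩
  have hex : ∃ c' : Fin k, T.image φ = (g c' : Finset (Fin x)) := ⟨c, himg⟩
  rw [hχ_def]
  simp only [dif_pos hex]
  have hspec := hex.choose_spec
  have : g hex.choose = g c := Subtype.ext (by rw [← hspec, himg])
  exact g.injective this
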